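/- arXiv:1709.07392 — 2 statements merged into one kernel-verified Lean document; each statement's English description precedes it below -/
import Mathlib

section
/- With all quantities the explicit formal power series in q defined in the context, the following identity holds in ℚ[[q]]: −5·L³·G = 25/144 − (625/288)v₁ + (25/24)v₁² − (5/24)v₁³ − (625/36)v₂ + (25/6)v₁v₂ + (350/9)v₃ − (5759/3600)X − (167/720)v₁X + (1/6)v₁²X − (475/12)v₂X + (41/3600)X² − (13/288)v₁X² + (1/240)X³, where G := (70/9)𝒳₃ + (575/18)𝒳𝒳₂ + (5/6)𝒴𝒳₂ + (557/72)𝒳³ − (629/72)𝒴𝒳² − (23/24)𝒴²𝒳 − (1/24)𝒴³ + (625/36)𝒵𝒳₂ − (175/9)𝒵𝒴𝒳 + (1441/48)𝒵₂𝒳 − (25/24)𝒵(𝒳² + 𝒴²) − (3125/288)𝒵²(𝒳 + 𝒴) + (41/48)𝒵₂𝒴 − (625/144)𝒵³ + (2233/128)𝒵𝒵₂ + (547/72)𝒵₃. (This identity is the precise content of the paper's proposition that the genus-two mirror conjecture of Bershadsky–Cecotti–Ooguri–Vafa, in the Yamaguchi–Yau/Huang–Klemm–Quackenbush formulation, is equivalent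 to the paper's Conjecture 1.1.) -/
noncomputable section

/-- The operator `q·d/dq` on formal power series in `q`. -/
def qd (f : PowerSeries ℚ) : PowerSeries ℚ :=
  PowerSeries.mk fun n => (n : ℚ) * PowerSeries.coeff n f

/-- `I₀(q) = Σ_{d≥0} ((5d)!/(d!)⁵) q^d`. -/
def I0 : PowerSeries ℚ :=
  PowerSeries.mk fun d => (Nat.factorial (5 * d) : ℚ) / ((Nat.factorial d : ℚ)) ^ 5

/-- `I₁(q) = Σ_{d≥1} ((5d)!/(d!)⁵)(5 Σ_{j=d+1}^{5d} 1/j) q^d`. -/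
def I1 : PowerSeries ℚ :=
  PowerSeries.mk fun d =>
    (Nat.factorial (5 * d) : ℚ) / ((Nat.factorial d : ℚ)) ^ 5 *
      (5 * ∑ j ∈ Finset.Icc (d + 1) (5 * d), (1 : ℚ) / j)

/-- `I_{1,1} = 1 + q·d/dq (I₁/I₀)`. -/
def I11 : PowerSeries ℚ := 1 + qd (I1 * I0⁻¹)

/-- The operator `d/du = (1/L)·q·d/dq`. -/
def du (L f : PowerSeries ℚ) : PowerSeries ℚ := L⁻¹ * qd f

/-- The generators `𝒳_k`: `𝒳₁ = (d/du) log(I₀/L)` and `𝒳_{k+1} = (d/du) 𝒳_k`. -/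
def Xg (L : PowerSeries ℚ) : ℕ → PowerSeries ℚ
  | 0 => 0
  | 1 => L⁻¹ * (qd I0 * I0⁻¹ - qd L * L⁻¹)
  | (k + 2) => du L (Xg L (k + 1))

/-- The generators `𝒴_k`: `𝒴₁ = (d/du) log(I₀·I_{1,1}/L²)` and `𝒴_{k+1} = (d/du) 𝒴_k`. -/
def Yg (L : PowerSeries ℚ) : ℕ → PowerSeries ℚ
  | 0 => 0
  | 1 => L⁻¹ * (qd I0 * I0⁻¹ + qd I11 * I11⁻¹ - 2 * (qd L * L⁻¹))
  | (k + 2) => du L (Yg L (k + 1))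

/-- The generators `𝒵_k`: `𝒵₁ = (d/du) log(q^{1/5}·L)` and `𝒵_{k+1} = (d/du) 𝒵_k`. -/
def Zg (L : PowerSeries ℚ) : ℕ → PowerSeries ℚ
  | 0 => 0
  | 1 => L⁻¹ * (qd L * L⁻¹ + PowerSeries.C (1 / 5 : ℚ))
  | (k + 2) => du L (Zg L (k + 1))


/-- The operator `-q·d/dq`. -/
def nqd (f : PowerSeries ℚ) : PowerSeries ℚ := -(qd f)

/-- `B_p = ((-q·d/dq)^p I₀)/I₀`. -/
def Bp (p : ℕ) : PowerSeries ℚ := nqd^[p] I0 * I0⁻¹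

/-- `X = -5⁵q/(1 - 5⁵q)`. -/
def Xser : PowerSeries ℚ :=
  -(5 ^ 5) * PowerSeries.X * (1 - 5 ^ 5 * PowerSeries.X)⁻¹

/-- `v₁ = A₁ + 1 + 2B₁`, as a function of `A₁`. -/
def v1 (A1 : PowerSeries ℚ) : PowerSeries ℚ := A1 + 1 + 2 * Bp 1

/-- `v₂ = -A₁B₁ - 2B₁² - B₁ + B₂`. -/
def v2 (A1 : PowerSeries ℚ) : PowerSeries ℚ :=
  -A1 * Bp 1 - 2 * (Bp 1) ^ 2 - Bp 1 + Bp 2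

/-- `v₃ = -A₁B₁² - B₁A₁X - 2B₁³ - 2B₁²X - B₁² + B₁B₂ - (3/5)B₁X + B₃`. -/
def v3 (A1 : PowerSeries ℚ) : PowerSeries ℚ :=
  -A1 * (Bp 1) ^ 2 - Bp 1 * A1 * Xser - 2 * (Bp 1) ^ 3 - 2 * (Bp 1) ^ 2 * Xser
    - (Bp 1) ^ 2 + Bp 1 * Bp 2 - PowerSeries.C (3 / 5 : ℚ) * Bp 1 * Xser + Bp 3

/-- The degree-three combination `G` of the basic generators appearing in the genus-two
mirror formula of Conjecture 1.1. -/
def G (L : PowerSeries ℚ) : PowerSeries ℚ :=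
  PowerSeries.C (70 / 9 : ℚ) * Xg L 3
    + PowerSeries.C (575 / 18 : ℚ) * Xg L 1 * Xg L 2
    + PowerSeries.C (5 / 6 : ℚ) * Yg L 1 * Xg L 2
    + PowerSeries.C (557 / 72 : ℚ) * (Xg L 1) ^ 3
    - PowerSeries.C (629 / 72 : ℚ) * Yg L 1 * (Xg L 1) ^ 2
    - PowerSeries.C (23 / 24 : ℚ) * (Yg L 1) ^ 2 * Xg L 1
    - PowerSeries.C (1 / 24 : ℚ) * (Yg L 1) ^ 3
    + PowerSeries.C (625 / 36 : ℚ) * Zg L 1 * Xg L 2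
    - PowerSeries.C (175 / 9 : ℚ) * Zg L 1 * Yg L 1 * Xg L 1
    + PowerSeries.C (1441 / 48 : ℚ) * Zg L 2 * Xg L 1
    - PowerSeries.C (25 / 24 : ℚ) * Zg L 1 * ((Xg L 1) ^ 2 + (Yg L 1) ^ 2)
    - PowerSeries.C (3125 / 288 : ℚ) * (Zg L 1) ^ 2 * (Xg L 1 + Yg L 1)
    + PowerSeries.C (41 / 48 : ℚ) * Zg L 2 * Yg L 1
    - PowerSeries.C (625 / 144 : ℚ) * (Zg L 1) ^ 3
    + PowerSeries.C (2233 / 128 : ℚ) * Zg L 1 * Zg L 2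
    + PowerSeries.C (547 / 72 : ℚ) * Zg L 3

open PowerSeries in
lemma qd_add (f g : PowerSeries ℚ) : qd (f + g) = qd f + qd g := by
  ext n; simp [qd, mul_add]

open PowerSeries in
lemma qd_sub (f g : PowerSeries ℚ) : qd (f - g) = qd f - qd g := by
  ext n; simp [qd, mul_sub]

open PowerSeries in
lemma qd_mul (f g : PowerSeries ℚ) : qd (f * g) = qd f * g + f * qd g := by
  ext n
  simp only [qd, PowerSeries.coeff_mk, map_add, PowerSeries.coeff_mul, Finset.mul_sum,
    ← Finset.sum_add_distrib]
  refine Finset.sum_congr rfl fun p hp => ?_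
  rw [Finset.HasAntidiagonal.mem_antidiagonal] at hp
  rw [← hp]
  push_cast
  ring

open PowerSeries in
lemma qd_C (r : ℚ) : qd (PowerSeries.C r) = 0 := by
  ext n
  simp only [qd, PowerSeries.coeff_mk, PowerSeries.coeff_C, map_zero]
  split_ifs with h
  · subst h; simp
  · simp

lemma qd_one : qd 1 = 0 := by
  have := qd_C 1
  rwa [map_one] at this

lemma qd_ofNat (n : ℕ) [n.AtLeastTwo] : qd (OfNat.ofNat n : PowerSeries ℚ) = 0 := by
  rw [← map_ofNat (PowerSeries.C (R := ℚ)) n]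
  exact qd_C _

lemma qd_X : qd (PowerSeries.X : PowerSeries ℚ) = PowerSeries.X := by
  ext n
  simp only [qd, PowerSeries.coeff_mk, PowerSeries.coeff_X]
  split_ifs with h
  · subst h; norm_num
  · simp

lemma qd_sq (f : PowerSeries ℚ) : qd (f ^ 2) = 2 * (f * qd f) := by
  rw [sq, qd_mul]; ring

lemma nqd_eq (f : PowerSeries ℚ) : nqd f = -(qd f) := rfl

/-- The identity in `ℚ[[q]]` expressing the equivalence between the
Yamaguchi–Yau/Huang–Klemm–Quackenbush form of the genus-two mirror conjecture and
Conjecture 1.1 of the paper: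
`-5·L³·G = 25/144 - (625/288)v₁ + (25/24)v₁² - (5/24)v₁³ - (625/36)v₂ + (25/6)v₁v₂
  + (350/9)v₃ - (5759/3600)X - (167/720)v₁X + (1/6)v₁²X - (475/12)v₂X + (41/3600)X²
  - (13/288)v₁X² + (1/240)X³`,
where `A₁` is the power series with `A₁·(q·I_{1,1}) = (-q·d/dq)(q·I_{1,1})`. -/
theorem statement0 (L : PowerSeries ℚ)
    (hc : PowerSeries.constantCoeff L = 1)
    (hL : L ^ 5 * (1 - 5 ^ 5 * PowerSeries.X) = 1)
    (A1 : PowerSeries ℚ)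
    (hA1 : A1 * (PowerSeries.X * I11) = nqd (PowerSeries.X * I11)) :
    -5 * L ^ 3 * G L =
      PowerSeries.C (25 / 144 : ℚ)
        - PowerSeries.C (625 / 288 : ℚ) * v1 A1
        + PowerSeries.C (25 / 24 : ℚ) * (v1 A1) ^ 2
        - PowerSeries.C (5 / 24 : ℚ) * (v1 A1) ^ 3
        - PowerSeries.C (625 / 36 : ℚ) * v2 A1
        + PowerSeries.C (25 / 6 : ℚ) * v1 A1 * v2 A1
        + PowerSeries.C (350 / 9 : ℚ) * v3 A1
        - PowerSeries.C (5759 / 3600 : ℚ) * Xser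
        - PowerSeries.C (167 / 720 : ℚ) * v1 A1 * Xser
        + PowerSeries.C (1 / 6 : ℚ) * (v1 A1) ^ 2 * Xser
        - PowerSeries.C (475 / 12 : ℚ) * v2 A1 * Xser
        + PowerSeries.C (41 / 3600 : ℚ) * Xser ^ 2
        - PowerSeries.C (13 / 288 : ℚ) * v1 A1 * Xser ^ 2
        + PowerSeries.C (1 / 240 : ℚ) * Xser ^ 3 := by
  classical
  -- constant coefficients and invertibility
  have hI0c : PowerSeries.constantCoeff I0 = 1 := by
    simp [I0]
  have hI0ne : I0 ≠ 0 := by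
    intro h; rw [h, map_zero] at hI0c; exact zero_ne_one hI0c
  have hI0u : I0 * I0⁻¹ = 1 :=
    PowerSeries.mul_inv_cancel _ (by rw [hI0c]; exact one_ne_zero)
  have hI11c : PowerSeries.constantCoeff I11 = 1 := by
    simp [I11, qd]
  have hI11ne : I11 ≠ 0 := by
    intro h; rw [h, map_zero] at hI11c; exact zero_ne_one hI11c
  have hI11u : I11 * I11⁻¹ = 1 :=
    PowerSeries.mul_inv_cancel _ (by rw [hI11c]; exact one_ne_zero)
  have hLne : L ≠ 0 := by
    intro h; rw [h, map_zero] at hc; exact zero_ne_one hc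
  have hLu : L * L⁻¹ = 1 :=
    PowerSeries.mul_inv_cancel _ (by rw [hc]; exact one_ne_zero)
  have hUc : PowerSeries.constantCoeff (1 - 5 ^ 5 * PowerSeries.X : PowerSeries ℚ) = 1 := by
    simp
  have hUne : (1 - 5 ^ 5 * PowerSeries.X : PowerSeries ℚ) ≠ 0 := by
    intro h; rw [h, map_zero] at hUc; exact zero_ne_one hUc
  have hUu : (1 - 5 ^ 5 * PowerSeries.X : PowerSeries ℚ) *
      (1 - 5 ^ 5 * PowerSeries.X : PowerSeries ℚ)⁻¹ = 1 :=
    PowerSeries.mul_inv_cancel _ (by rw [hUc]; exact one_ne_zero)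
  -- Xser basics
  have hXU : Xser * (1 - 5 ^ 5 * PowerSeries.X) = -(5 ^ 5) * PowerSeries.X := by
    unfold Xser
    linear_combination (-(5 ^ 5) * PowerSeries.X) * hUu
  have hqdU : qd (1 - 5 ^ 5 * PowerSeries.X) = -(5 ^ 5) * PowerSeries.X := by
    rw [qd_sub, qd_one, qd_mul, qd_X,
      show ((5 : PowerSeries ℚ) ^ 5) = 3125 from by norm_num, qd_ofNat]
    ring
  have hneg : (-(5 ^ 5) : PowerSeries ℚ) = PowerSeries.C (-3125 : ℚ) := by
    rw [map_neg, show ((3125:ℚ)) = ((3125:ℚ)) from rfl]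
    rw [map_ofNat]
    norm_num
  have e2 : qd (-(5 ^ 5) * PowerSeries.X) = -(5 ^ 5) * PowerSeries.X := by
    rw [hneg, qd_mul, qd_C, qd_X]; ring
  have hqds : qd Xser = Xser - Xser ^ 2 := by
    apply mul_right_cancel₀ hUne
    have e := congrArg qd hXU
    rw [qd_mul, hqdU, e2] at e
    linear_combination e + (Xser - 1) * hXU
  -- derivative of L
  have e2L : qd (L ^ 5) = 5 * L ^ 4 * qd L := by
    rw [show L ^ 5 = L * (L * (L * (L * L))) from by ring]
    simp only [qd_mul]; ring
  have eL := congrArg qd hL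
  rw [qd_mul, e2L, hqdU, qd_one] at eL
  have hqdL : (5 : PowerSeries ℚ) * qd L = -(Xser * L) := by
    have h4 : L ^ 4 * (1 - 5 ^ 5 * PowerSeries.X) ≠ 0 :=
      mul_ne_zero (pow_ne_zero 4 hLne) hUne
    apply mul_right_cancel₀ h4
    linear_combination eL + L ^ 5 * hXU
  have hqdLi : (5 : PowerSeries ℚ) * qd L⁻¹ = Xser * L⁻¹ := by
    have eLi : qd (L * L⁻¹) = 0 := by rw [hLu]; exact qd_one
    rw [qd_mul] at eLi
    apply mul_left_cancel₀ hLne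
    linear_combination 5 * eLi - L⁻¹ * hqdL
  -- B_p facts
  have hqdI0 : qd I0 = -(Bp 1 * I0) := by
    have h1 : Bp 1 = nqd I0 * I0⁻¹ := by unfold Bp; rw [Function.iterate_one]
    rw [h1, nqd_eq]
    linear_combination (-(qd I0)) * hI0u
  have hqdI0i : qd I0⁻¹ = Bp 1 * I0⁻¹ := by
    have e : qd (I0 * I0⁻¹) = 0 := by rw [hI0u]; exact qd_one
    rw [qd_mul] at e
    apply mul_left_cancel₀ hI0ne
    linear_combination e - I0⁻¹ * hqdI0
  have hBmul : ∀ p, nqd^[p] I0 = Bp p * I0 := by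
    intro p; unfold Bp
    linear_combination (-(nqd^[p] I0)) * hI0u
  have hBp : ∀ p, qd (Bp p) = Bp 1 * Bp p - Bp (p + 1) := by
    intro p
    have e1 : qd (Bp p * I0) = -(Bp (p + 1) * I0) := by
      rw [← hBmul p, ← hBmul (p + 1), Function.iterate_succ_apply', nqd_eq, neg_neg]
    rw [qd_mul] at e1
    apply mul_right_cancel₀ hI0ne
    linear_combination e1 - Bp p * hqdI0
  -- A1 fact
  have hqdI11 : qd I11 = -((A1 + 1) * I11) := by
    have h := hA1
    rw [nqd_eq, qd_mul, qd_X] at h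
    apply mul_left_cancel₀ (PowerSeries.X_ne_zero : (PowerSeries.X : PowerSeries ℚ) ≠ 0)
    linear_combination h
  have hc5 : (5 : PowerSeries ℚ) * PowerSeries.C (1/5 : ℚ) = 1 := by
    rw [← map_ofNat (PowerSeries.C (R := ℚ)), ← map_mul]; norm_num [map_ofNat]
  have hq4 : qd (4 : PowerSeries ℚ) = 0 := qd_ofNat 4
  have hq5 : qd (5 : PowerSeries ℚ) = 0 := qd_ofNat 5
  have hq25 : qd (25 : PowerSeries ℚ) = 0 := qd_ofNat 25
  -- closed forms for the generators
  have hX1 : (5 : PowerSeries ℚ) * Xg L 1 = L⁻¹ * (Xser - 5 * Bp 1) := by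
    rw [show Xg L 1 = L⁻¹ * (qd I0 * I0⁻¹ - qd L * L⁻¹) from rfl]
    linear_combination (5 * L⁻¹ * I0⁻¹) * hqdI0 - (5 * L⁻¹ * Bp 1) * hI0u
      - L⁻¹ ^ 2 * hqdL + L⁻¹ * Xser * hLu
  have hY1 : (5 : PowerSeries ℚ) * Yg L 1 = L⁻¹ * (2 * Xser - 5 * Bp 1 - 5 * (A1 + 1)) := by
    rw [show Yg L 1 = L⁻¹ * (qd I0 * I0⁻¹ + qd I11 * I11⁻¹ - 2 * (qd L * L⁻¹)) from rfl]
    linear_combination (5 * L⁻¹ * I0⁻¹) * hqdI0 - (5 * L⁻¹ * Bp 1) * hI0u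
      + (5 * L⁻¹ * I11⁻¹) * hqdI11 - (5 * L⁻¹ * (A1 + 1)) * hI11u
      - 2 * L⁻¹ ^ 2 * hqdL + 2 * L⁻¹ * Xser * hLu
  have hZ1 : (5 : PowerSeries ℚ) * Zg L 1 = L⁻¹ * (1 - Xser) := by
    rw [show Zg L 1 = L⁻¹ * (qd L * L⁻¹ + PowerSeries.C (1/5 : ℚ)) from rfl]
    linear_combination L⁻¹ ^ 2 * hqdL + L⁻¹ * hc5 - L⁻¹ * Xser * hLu
  have hX2 : (25 : PowerSeries ℚ) * Xg L 2 =
      L⁻¹ ^ 2 * (5 * Xser - 4 * Xser ^ 2 + 25 * Bp 2 - 5 * (Bp 1 * Xser) - 25 * Bp 1 ^ 2) := by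
    have e := congrArg qd hX1
    simp only [qd_mul, qd_sub, qd_add, qd_one, qd_sq, hq4, hq5, hq25, zero_mul, zero_add] at e
    rw [show Xg L 2 = L⁻¹ * qd (Xg L 1) from rfl]
    linear_combination ((5)*L⁻¹) * (e) + ((-5)*L⁻¹*Bp 1 + L⁻¹*Xser) * (hqdLi) + ((5)*L⁻¹^2) * (hqds) + ((-25)*L⁻¹^2) * (hBp 1)
  have hX3 : (125 : PowerSeries ℚ) * Xg L 3 =
      L⁻¹ ^ 3 * (25 * Xser - 55 * Xser ^ 2 + 32 * Xser ^ 3 - 125 * Bp 3 + 75 * (Bp 2 * Xser)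
        - 25 * (Bp 1 * Xser) + 15 * (Bp 1 * Xser ^ 2) + 375 * (Bp 1 * Bp 2)
        - 75 * (Bp 1 ^ 2 * Xser) - 250 * Bp 1 ^ 3) := by
    have e := congrArg qd hX2
    simp only [qd_mul, qd_sub, qd_add, qd_one, qd_sq, hq4, hq5, hq25, zero_mul, zero_add] at e
    rw [show Xg L 3 = L⁻¹ * qd (Xg L 2) from rfl]
    linear_combination ((5)*L⁻¹) * (e) + ((-10)*L⁻¹^2*Bp 1*Xser + (-50)*L⁻¹^2*Bp 1^2 + (50)*L⁻¹^2*Bp 2 + (10)*L⁻¹^2*Xser + (-8)*L⁻¹^2*Xser^2) * (hqdLi) + ((25)*L⁻¹^3 + (-25)*L⁻¹^3*Bp 1 + (-40)*L⁻¹^3*Xser) * (hqds) + ((-250)*L⁻¹^3*Bp 1 + (-25)*L⁻¹^3*Xser) * (hBp 1) + ((125)*L⁻¹^3) * (hBp 2)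
  have hZ2 : (25 : PowerSeries ℚ) * Zg L 2 = L⁻¹ ^ 2 * (4 * Xser ^ 2 - 4 * Xser) := by
    have e := congrArg qd hZ1
    simp only [qd_mul, qd_sub, qd_add, qd_one, qd_sq, hq4, hq5, hq25, zero_mul, zero_add] at e
    rw [show Zg L 2 = L⁻¹ * qd (Zg L 1) from rfl]
    linear_combination ((5)*L⁻¹) * (e) + (L⁻¹ + (-1)*L⁻¹*Xser) * (hqdLi) + ((-5)*L⁻¹^2) * (hqds)
  have hZ3 : (125 : PowerSeries ℚ) * Zg L 3 =
      L⁻¹ ^ 3 * (-20 * Xser + 52 * Xser ^ 2 - 32 * Xser ^ 3) := by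
    have e := congrArg qd hZ2
    simp only [qd_mul, qd_sub, qd_add, qd_one, qd_sq, hq4, hq5, hq25, zero_mul, zero_add] at e
    rw [show Zg L 3 = L⁻¹ * qd (Zg L 2) from rfl]
    linear_combination ((5)*L⁻¹) * (e) + ((-8)*L⁻¹^2*Xser + (8)*L⁻¹^2*Xser^2) * (hqdLi) + ((-20)*L⁻¹^3 + (40)*L⁻¹^3*Xser) * (hqds)
  -- constants (stage A)
  have hc_1441_48 : (48 : PowerSeries ℚ) * PowerSeries.C (1441/48 : ℚ) = 1441 := by
      rw [← map_ofNat (PowerSeries.C (R := ℚ)), ← map_mul]; norm_num [map_ofNat]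
  have hc_175_9 : (9 : PowerSeries ℚ) * PowerSeries.C (175/9 : ℚ) = 175 := by
      rw [← map_ofNat (PowerSeries.C (R := ℚ)), ← map_mul]; norm_num [map_ofNat]
  have hc_1_24 : (24 : PowerSeries ℚ) * PowerSeries.C (1/24 : ℚ) = 1 := by
      rw [← map_ofNat (PowerSeries.C (R := ℚ)), ← map_mul]; norm_num [map_ofNat]
  have hc_2233_128 : (128 : PowerSeries ℚ) * PowerSeries.C (2233/128 : ℚ) = 2233 := by
      rw [← map_ofNat (PowerSeries.C (R := ℚ)), ← map_mul]; norm_num [map_ofNat]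
  have hc_23_24 : (24 : PowerSeries ℚ) * PowerSeries.C (23/24 : ℚ) = 23 := by
      rw [← map_ofNat (PowerSeries.C (R := ℚ)), ← map_mul]; norm_num [map_ofNat]
  have hc_25_24 : (24 : PowerSeries ℚ) * PowerSeries.C (25/24 : ℚ) = 25 := by
      rw [← map_ofNat (PowerSeries.C (R := ℚ)), ← map_mul]; norm_num [map_ofNat]
  have hc_3125_288 : (288 : PowerSeries ℚ) * PowerSeries.C (3125/288 : ℚ) = 3125 := by
      rw [← map_ofNat (PowerSeries.C (R := ℚ)), ← map_mul]; norm_num [map_ofNat]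
  have hc_41_48 : (48 : PowerSeries ℚ) * PowerSeries.C (41/48 : ℚ) = 41 := by
      rw [← map_ofNat (PowerSeries.C (R := ℚ)), ← map_mul]; norm_num [map_ofNat]
  have hc_547_72 : (72 : PowerSeries ℚ) * PowerSeries.C (547/72 : ℚ) = 547 := by
      rw [← map_ofNat (PowerSeries.C (R := ℚ)), ← map_mul]; norm_num [map_ofNat]
  have hc_557_72 : (72 : PowerSeries ℚ) * PowerSeries.C (557/72 : ℚ) = 557 := by
      rw [← map_ofNat (PowerSeries.C (R := ℚ)), ← map_mul]; norm_num [map_ofNat]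
  have hc_575_18 : (18 : PowerSeries ℚ) * PowerSeries.C (575/18 : ℚ) = 575 := by
      rw [← map_ofNat (PowerSeries.C (R := ℚ)), ← map_mul]; norm_num [map_ofNat]
  have hc_5_6 : (6 : PowerSeries ℚ) * PowerSeries.C (5/6 : ℚ) = 5 := by
      rw [← map_ofNat (PowerSeries.C (R := ℚ)), ← map_mul]; norm_num [map_ofNat]
  have hc_625_144 : (144 : PowerSeries ℚ) * PowerSeries.C (625/144 : ℚ) = 625 := by
      rw [← map_ofNat (PowerSeries.C (R := ℚ)), ← map_mul]; norm_num [map_ofNat]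
  have hc_625_36 : (36 : PowerSeries ℚ) * PowerSeries.C (625/36 : ℚ) = 625 := by
      rw [← map_ofNat (PowerSeries.C (R := ℚ)), ← map_mul]; norm_num [map_ofNat]
  have hc_629_72 : (72 : PowerSeries ℚ) * PowerSeries.C (629/72 : ℚ) = 629 := by
      rw [← map_ofNat (PowerSeries.C (R := ℚ)), ← map_mul]; norm_num [map_ofNat]
  have hc_70_9 : (9 : PowerSeries ℚ) * PowerSeries.C (70/9 : ℚ) = 70 := by
      rw [← map_ofNat (PowerSeries.C (R := ℚ)), ← map_mul]; norm_num [map_ofNat]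
  -- stage A: closed form for G
  have hGL : (144000 : PowerSeries ℚ) * G L = L⁻¹ ^ 3 * ((33500) + (20500)*A1 + (-308000)*A1*Bp 1 + (-39200)*A1*Bp 1*Xser + (1672000)*A1*Bp 1^2 + (-120000)*A1*Bp 2 + (-2920)*A1*Xser + (1300)*A1*Xser^2 + (-12000)*A1^2 + (156000)*A1^2*Bp 1 + (-4800)*A1^2*Xser + (6000)*A1^3 + (-339000)*Bp 1 + (-1360000)*Bp 1*Bp 2 + (-473840)*Bp 1*Xser + (2600)*Bp 1*Xser^2 + (552000)*Bp 1^2 + (-59200)*Bp 1^2*Xser + (2768000)*Bp 1^3 + (380000)*Bp 2 + (1140000)*Bp 2*Xser + (-1120000)*Bp 3 + (47952)*Xser + (972)*Xser^2 + (-120)*Xser^3) := by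
    unfold G
    linear_combination ((16000)*Xg L 3) * (hc_70_9) + ((8000)*Xg L 1*Xg L 2) * (hc_575_18) + ((24000)*Xg L 2*Yg L 1) * (hc_5_6) + ((2000)*Xg L 1^3) * (hc_557_72) + ((-2000)*Xg L 1^2*Yg L 1) * (hc_629_72) + ((-6000)*Xg L 1*Yg L 1^2) * (hc_23_24) + ((-6000)*Yg L 1^3) * (hc_1_24) + ((4000)*Xg L 2*Zg L 1) * (hc_625_36) + ((-16000)*Xg L 1*Yg L 1*Zg L 1) * (hc_175_9) + ((3000)*Xg L 1*Zg L 2) * (hc_1441_48) + ((-6000)*Xg L 1^2*Zg L 1 + (-6000)*Yg L 1^2*Zg L 1) * (hc_25_24) + ((-500)*Xg L 1*Zg L 1^2 + (-500)*Yg L 1*Zg L 1^2) * (hc_3125_288) + ((3000)*Yg L 1*Zg L 2) * (hc_41_48) + ((-1000)*Zg L 1^3) * (hc_625_144) + ((1125)*Zg L 1*Zg L 2) * (hc_2233_128) + ((2000)*Zg L 3) * (hc_547_72) + ((-222800)*L⁻¹*Bp 1*Xg L 1 + (251600)*L⁻¹*Bp 1*Yg L 1 + (30000)*L⁻¹*Bp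 1*Zg L 1 + (44560)*L⁻¹*Xser*Xg L 1 + (-50320)*L⁻¹*Xser*Yg L 1 + (-6000)*L⁻¹*Xser*Zg L 1 + (-89120)*L⁻¹^2*Bp 1*Xser + (222800)*L⁻¹^2*Bp 1^2 + (8912)*L⁻¹^2*Xser^2 + (-251600)*Xg L 1*Yg L 1 + (-30000)*Xg L 1*Zg L 1 + (222800)*Xg L 1^2 + (920000)*Xg L 2 + (-560000)*Yg L 1*Zg L 1 + (-27600)*Yg L 1^2 + (-312500)*Zg L 1^2 + (864600)*Zg L 2) * (hX1) + ((-184000)*L⁻¹*Bp 1 + (36800)*L⁻¹*Xser + (4800)*Yg L 1 + (100000)*Zg L 1) * (hX2) + ((8960)) * (hX3) + ((1200)*L⁻¹*A1*Yg L 1 + (30000)*L⁻¹*A1*Zg L 1 + (28800)*L⁻¹*Bp 1*Yg L 1 + (590000)*L⁻¹*Bp 1*Zg L 1 + (-6000)*L⁻¹*Xser*Yg L 1 + (-124000)*L⁻¹*Xser*Zg L 1 + (1200)*L⁻¹*Yg L 1 + (30000)*L⁻¹*Zg L 1 + (-1200)*L⁻¹^2 + (-2400)*L⁻¹^2*A1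 + (-30000)*L⁻¹^2*A1*Bp 1 + (6480)*L⁻¹^2*A1*Xser + (-1200)*L⁻¹^2*A1^2 + (-30000)*L⁻¹^2*Bp 1 + (113360)*L⁻¹^2*Bp 1*Xser + (-304400)*L⁻¹^2*Bp 1^2 + (24000)*L⁻¹^2*Bp 2 + (11280)*L⁻¹^2*Xser + (-16304)*L⁻¹^2*Xser^2 + (-30000)*Yg L 1*Zg L 1 + (-1200)*Yg L 1^2 + (-312500)*Zg L 1^2 + (24600)*Zg L 2) * (hY1) + ((312500)*L⁻¹*A1*Zg L 1 + (625000)*L⁻¹*Bp 1*Zg L 1 + (-162500)*L⁻¹*Xser*Zg L 1 + (287500)*L⁻¹*Zg L 1 + (27500)*L⁻¹^2 + (2500)*L⁻¹^2*A1 + (-620000)*L⁻¹^2*A1*Bp 1 + (73500)*L⁻¹^2*A1*Xser + (-30000)*L⁻¹^2*A1^2 + (-495000)*L⁻¹^2*Bp 1 + (147000)*L⁻¹^2*Bp 1*Xser + (-1120000)*L⁻¹^2*Bp 1^2 + (500000)*L⁻¹^2*Bp 2 + (146000)*L⁻¹^2*Xser + (-98300)*L⁻¹^2*Xser^2 + (-125000)*Zg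 L 1^2 + (502425)*Zg L 2) * (hZ1) + ((15177)*L⁻¹ + (-4920)*L⁻¹*A1 + (-177840)*L⁻¹*Bp 1 + (16455)*L⁻¹*Xser) * (hZ2) + ((8752)) * (hZ3)
  -- constants (stage B)
  have hd_13_288 : (288 : PowerSeries ℚ) * PowerSeries.C (13/288 : ℚ) = 13 := by
      rw [← map_ofNat (PowerSeries.C (R := ℚ)), ← map_mul]; norm_num [map_ofNat]
  have hd_167_720 : (720 : PowerSeries ℚ) * PowerSeries.C (167/720 : ℚ) = 167 := by
      rw [← map_ofNat (PowerSeries.C (R := ℚ)), ← map_mul]; norm_num [map_ofNat]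
  have hd_1_240 : (240 : PowerSeries ℚ) * PowerSeries.C (1/240 : ℚ) = 1 := by
      rw [← map_ofNat (PowerSeries.C (R := ℚ)), ← map_mul]; norm_num [map_ofNat]
  have hd_1_6 : (6 : PowerSeries ℚ) * PowerSeries.C (1/6 : ℚ) = 1 := by
      rw [← map_ofNat (PowerSeries.C (R := ℚ)), ← map_mul]; norm_num [map_ofNat]
  have hd_25_144 : (144 : PowerSeries ℚ) * PowerSeries.C (25/144 : ℚ) = 25 := by
      rw [← map_ofNat (PowerSeries.C (R := ℚ)), ← map_mul]; norm_num [map_ofNat]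
  have hd_25_24 : (24 : PowerSeries ℚ) * PowerSeries.C (25/24 : ℚ) = 25 := by
      rw [← map_ofNat (PowerSeries.C (R := ℚ)), ← map_mul]; norm_num [map_ofNat]
  have hd_25_6 : (6 : PowerSeries ℚ) * PowerSeries.C (25/6 : ℚ) = 25 := by
      rw [← map_ofNat (PowerSeries.C (R := ℚ)), ← map_mul]; norm_num [map_ofNat]
  have hd_350_9 : (9 : PowerSeries ℚ) * PowerSeries.C (350/9 : ℚ) = 350 := by
      rw [← map_ofNat (PowerSeries.C (R := ℚ)), ← map_mul]; norm_num [map_ofNat]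
  have hd_3_5 : (5 : PowerSeries ℚ) * PowerSeries.C (3/5 : ℚ) = 3 := by
      rw [← map_ofNat (PowerSeries.C (R := ℚ)), ← map_mul]; norm_num [map_ofNat]
  have hd_41_3600 : (3600 : PowerSeries ℚ) * PowerSeries.C (41/3600 : ℚ) = 41 := by
      rw [← map_ofNat (PowerSeries.C (R := ℚ)), ← map_mul]; norm_num [map_ofNat]
  have hd_475_12 : (12 : PowerSeries ℚ) * PowerSeries.C (475/12 : ℚ) = 475 := by
      rw [← map_ofNat (PowerSeries.C (R := ℚ)), ← map_mul]; norm_num [map_ofNat]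
  have hd_5759_3600 : (3600 : PowerSeries ℚ) * PowerSeries.C (5759/3600 : ℚ) = 5759 := by
      rw [← map_ofNat (PowerSeries.C (R := ℚ)), ← map_mul]; norm_num [map_ofNat]
  have hd_5_24 : (24 : PowerSeries ℚ) * PowerSeries.C (5/24 : ℚ) = 5 := by
      rw [← map_ofNat (PowerSeries.C (R := ℚ)), ← map_mul]; norm_num [map_ofNat]
  have hd_625_288 : (288 : PowerSeries ℚ) * PowerSeries.C (625/288 : ℚ) = 625 := by
      rw [← map_ofNat (PowerSeries.C (R := ℚ)), ← map_mul]; norm_num [map_ofNat]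
  have hd_625_36 : (36 : PowerSeries ℚ) * PowerSeries.C (625/36 : ℚ) = 625 := by
      rw [← map_ofNat (PowerSeries.C (R := ℚ)), ← map_mul]; norm_num [map_ofNat]
  have hM : (144000 : PowerSeries ℚ) ≠ 0 := by
    intro h
    have h2 := congrArg PowerSeries.constantCoeff h
    rw [map_ofNat, map_zero] at h2
    norm_num at h2
  refine mul_left_cancel₀ hM ?_
  unfold v1 v2 v3
  linear_combination ((-5)*L^3) * (hGL) + ((28800)*Bp 1*PowerSeries.C (350/9 : ℚ)*Xser) * (hd_3_5) + ((-1000)) * (hd_25_144) + ((500) + (500)*A1 + (1000)*Bp 1) * (hd_625_288) + ((-6000) + (-12000)*A1 + (-24000)*A1*Bp 1 + (-6000)*A1^2 + (-24000)*Bp 1 + (-24000)*Bp 1^2) * (hd_25_24) + ((6000) + (18000)*A1 + (72000)*A1*Bp 1 + (72000)*A1*Bp 1^2 + (18000)*A1^2 + (36000)*A1^2*Bp 1 + (6000)*A1^3 + (36000)*Bp 1 + (72000)*Bp 1^2 + (48000)*Bp 1^3) * (hd_5_24) + ((-4000)*A1*Bp 1 + (-4000)*Bp 1 + (-8000)*Bp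 1^2 + (4000)*Bp 2) * (hd_625_36) + ((48000)*A1*Bp 1 + (96000)*A1*Bp 1^2 + (-24000)*A1*Bp 2 + (24000)*A1^2*Bp 1 + (24000)*Bp 1 + (-48000)*Bp 1*Bp 2 + (96000)*Bp 1^2 + (96000)*Bp 1^3 + (-24000)*Bp 2) * (hd_25_6) + ((16000)*A1*Bp 1*Xser + (16000)*A1*Bp 1^2 + (-16000)*Bp 1*Bp 2 + (9600)*Bp 1*Xser + (16000)*Bp 1^2 + (32000)*Bp 1^2*Xser + (32000)*Bp 1^3 + (-16000)*Bp 3) * (hd_350_9) + ((40)*Xser) * (hd_5759_3600) + ((200)*A1*Xser + (400)*Bp 1*Xser + (200)*Xser) * (hd_167_720) + ((-96000)*A1*Bp 1*Xser + (-48000)*A1*Xser + (-24000)*A1^2*Xser + (-96000)*Bp 1*Xser + (-96000)*Bp 1^2*Xser + (-24000)*Xser) * (hd_1_6) + ((-12000)*A1*Bp 1*Xser + (-12000)*Bp 1*Xser + (-24000)*Bp 1^2*Xser + (12000)*Bp 2*Xser) * (hd_475_12) + ((-40)*Xser^2) * (hd_41_3600) + ((500)*A1*Xser^2 + (1000)*Bp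 1*Xser^2 + (500)*Xser^2) * (hd_13_288) + ((-600)*Xser^3) * (hd_1_240) + ((-167500) + (-167500)*L*L⁻¹ + (-102500)*L*L⁻¹*A1 + (1540000)*L*L⁻¹*A1*Bp 1 + (196000)*L*L⁻¹*A1*Bp 1*Xser + (-8360000)*L*L⁻¹*A1*Bp 1^2 + (600000)*L*L⁻¹*A1*Bp 2 + (14600)*L*L⁻¹*A1*Xser + (-6500)*L*L⁻¹*A1*Xser^2 + (60000)*L*L⁻¹*A1^2 + (-780000)*L*L⁻¹*A1^2*Bp 1 + (24000)*L*L⁻¹*A1^2*Xser + (-30000)*L*L⁻¹*A1^3 + (1695000)*L*L⁻¹*Bp 1 + (6800000)*L*L⁻¹*Bp 1*Bp 2 + (2369200)*L*L⁻¹*Bp 1*Xser + (-13000)*L*L⁻¹*Bp 1*Xser^2 + (-2760000)*L*L⁻¹*Bp 1^2 + (296000)*L*L⁻¹*Bp 1^2*Xser + (-13840000)*L*L⁻¹*Bp 1^3 + (-1900000)*L*L⁻¹*Bp 2 + (-5700000)*L*L⁻¹*Bp 2*Xser + (5600000)*L*L⁻¹*Bp 3 + (-239760)*L*L⁻¹*Xser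 + (-4860)*L*L⁻¹*Xser^2 + (600)*L*L⁻¹*Xser^3 + (-167500)*L^2*L⁻¹^2 + (-102500)*L^2*L⁻¹^2*A1 + (1540000)*L^2*L⁻¹^2*A1*Bp 1 + (196000)*L^2*L⁻¹^2*A1*Bp 1*Xser + (-8360000)*L^2*L⁻¹^2*A1*Bp 1^2 + (600000)*L^2*L⁻¹^2*A1*Bp 2 + (14600)*L^2*L⁻¹^2*A1*Xser + (-6500)*L^2*L⁻¹^2*A1*Xser^2 + (60000)*L^2*L⁻¹^2*A1^2 + (-780000)*L^2*L⁻¹^2*A1^2*Bp 1 + (24000)*L^2*L⁻¹^2*A1^2*Xser + (-30000)*L^2*L⁻¹^2*A1^3 + (1695000)*L^2*L⁻¹^2*Bp 1 + (6800000)*L^2*L⁻¹^2*Bp 1*Bp 2 + (2369200)*L^2*L⁻¹^2*Bp 1*Xser + (-13000)*L^2*L⁻¹^2*Bp 1*Xser^2 + (-2760000)*L^2*L⁻¹^2*Bp 1^2 + (296000)*L^2*L⁻¹^2*Bp 1^2*Xser + (-13840000)*L^2*L⁻¹^2*Bp 1^3 + (-1900000)*L^2*L⁻¹^2*Bp 2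 + (-5700000)*L^2*L⁻¹^2*Bp 2*Xser + (5600000)*L^2*L⁻¹^2*Bp 3 + (-239760)*L^2*L⁻¹^2*Xser + (-4860)*L^2*L⁻¹^2*Xser^2 + (600)*L^2*L⁻¹^2*Xser^3 + (-102500)*A1 + (1540000)*A1*Bp 1 + (196000)*A1*Bp 1*Xser + (-8360000)*A1*Bp 1^2 + (600000)*A1*Bp 2 + (14600)*A1*Xser + (-6500)*A1*Xser^2 + (60000)*A1^2 + (-780000)*A1^2*Bp 1 + (24000)*A1^2*Xser + (-30000)*A1^3 + (1695000)*Bp 1 + (6800000)*Bp 1*Bp 2 + (2369200)*Bp 1*Xser + (-13000)*Bp 1*Xser^2 + (-2760000)*Bp 1^2 + (296000)*Bp 1^2*Xser + (-13840000)*Bp 1^3 + (-1900000)*Bp 2 + (-5700000)*Bp 2*Xser + (5600000)*Bp 3 + (-239760)*Xser + (-4860)*Xser^2 + (600)*Xser^3) * (hLu)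

end
end

section
/- Let K := ℚ(t, 𝔮) with derivation δ := (𝔮/5)·d/d𝔮 (fixing t), and set L := t𝔮/(5(1+𝔮)). Define r₀ := 1, r₁ := (1 − 𝔮/12)/(t𝔮), r₂ := (1 − (13/12)𝔮 − (287/288)𝔮²)/(t²𝔮²), and θ₀ := (1+𝔮)²/(t𝔮²), θ₁ := (1+𝔮)²(12 − 25𝔮)/(12 t² 𝔮³), θ₂ := (1+𝔮)²(288 − 1176𝔮 + 625𝔮²)/(288 t³ 𝔮⁴), with θ₋₁ := 0. Then for each k = 0, 1, 2 the identity δ(θ_{k−1}) + (L − t/5)·θ_k + ((1+𝔮)/(5𝔮²))·r_k = 0 holds in K. (These identities encode the differential equation (z·q·d/dq + L_α − t/5)·R⁴_{ᾱ}(z) + (I₀/5)·R_{0,ᾱ}(z) = 0 order by order in z, and verify the paper's explicit formulas Ψ^{4α} = ((1+𝔮)/t)·I₀, (R₁)^{4α} = ((1+𝔮)(12−25𝔮)/(12t²𝔮))·I₀ and (R₂)^{4α} = ((1+𝔮)(288−1176𝔮+625𝔮²)/(288t³𝔮²))·I₀ for the special row of the R-matrix.) -/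
noncomputable section

/-- In `K = ℚ(t, 𝔮)` with the derivation `δ = (𝔮/5)·d/d𝔮`
(characterized by additivity, the Leibniz rule, `δ t = 0`, `δ 𝔮 = 𝔮/5`), set
`L := t𝔮/(5(1+𝔮))`, `r₀ = 1`, `r₁ = (1 − 𝔮/12)/(t𝔮)`,
`r₂ = (1 − (13/12)𝔮 − (287/288)𝔮²)/(t²𝔮²)`, and
`θ₋₁ = 0`, `θ₀ = (1+𝔮)²/(t𝔮²)`, `θ₁ = (1+𝔮)²(12 − 25𝔮)/(12t²𝔮³)`,
`θ₂ = (1+𝔮)²(288 − 1176𝔮 + 625𝔮²)/(288t³𝔮⁴)`.  Then for each `k = 0, 1, 2` one has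
`δ(θ_{k−1}) + (L − t/5)·θ_k + ((1+𝔮)/(5𝔮²))·r_k = 0`. -/
theorem statement13 {K : Type*} [Field K] [CharZero K] (t qm : K)
    (ht : t ≠ 0) (hqm : qm ≠ 0) (h1q : 1 + qm ≠ 0)
    (δ : K → K)
    (hadd : ∀ a b : K, δ (a + b) = δ a + δ b)
    (hleib : ∀ a b : K, δ (a * b) = δ a * b + a * δ b)
    (hδt : δ t = 0) (hδq : δ qm = qm / 5) :
    (δ 0 + (t * qm / (5 * (1 + qm)) - t / 5) * ((1 + qm) ^ 2 / (t * qm ^ 2))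
        + (1 + qm) / (5 * qm ^ 2) * 1 = 0) ∧
    (δ ((1 + qm) ^ 2 / (t * qm ^ 2))
        + (t * qm / (5 * (1 + qm)) - t / 5) *
            ((1 + qm) ^ 2 * (12 - 25 * qm) / (12 * t ^ 2 * qm ^ 3))
        + (1 + qm) / (5 * qm ^ 2) * ((1 - qm / 12) / (t * qm)) = 0) ∧
    (δ ((1 + qm) ^ 2 * (12 - 25 * qm) / (12 * t ^ 2 * qm ^ 3))
        + (t * qm / (5 * (1 + qm)) - t / 5) *
            ((1 + qm) ^ 2 * (288 - 1176 * qm + 625 * qm ^ 2) / (288 * t ^ 3 * qm ^ 4))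
        + (1 + qm) / (5 * qm ^ 2) *
            ((1 - 13 / 12 * qm - 287 / 288 * qm ^ 2) / (t ^ 2 * qm ^ 2)) = 0) := by
  have d0 : δ 0 = 0 := by have := hadd 0 0; simpa using this
  have d1 : δ 1 = 0 := by have := hleib 1 1; simpa using this
  have dnat : ∀ n : ℕ, δ (n : K) = 0 := by
    intro n
    induction n with
    | zero => simpa using d0
    | succ n ih => push_cast; rw [hadd, ih, d1]; ring
  have dneg : ∀ a : K, δ (-a) = -δ a := by
    intro a
    have h := hadd a (-a)
    simp [d0] at h
    linear_combination -h
  have d12 : δ (12 : K) = 0 := by simpa using dnat 12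
  have d25 : δ (25 : K) = 0 := by simpa using dnat 25
  have d1q : δ (1 + qm) = qm / 5 := by rw [hadd, d1, hδq, zero_add]
  have dsq : δ ((1 + qm) ^ 2) = 2 * (1 + qm) * (qm / 5) := by
    rw [sq, hleib, d1q]; ring
  have dq2 : δ (qm ^ 2) = 2 * qm ^ 2 / 5 := by rw [sq, hleib, hδq]; ring
  have dq3 : δ (qm ^ 3) = 3 * qm ^ 3 / 5 := by
    have e : qm ^ 3 = qm * qm ^ 2 := by ring
    rw [e, hleib, hδq, dq2]; ring
  have dt2 : δ (t ^ 2) = 0 := by rw [sq, hleib, hδt]; ring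
  have dquot : ∀ N D : K, D ≠ 0 → δ (N / D) = (δ N * D - N * δ D) / D ^ 2 := by
    intro N D hD
    have h : δ (N / D * D) = δ N := by rw [div_mul_cancel₀ _ hD]
    rw [hleib] at h
    have h2 : N / D * D = N := div_mul_cancel₀ N hD
    rw [eq_div_iff (pow_ne_zero 2 hD)]
    linear_combination D * h - δ D * h2
  have dden0 : δ (t * qm ^ 2) = t * (2 * qm ^ 2 / 5) := by
    rw [hleib, hδt, dq2]; ring
  have dden1 : δ (12 * t ^ 2 * qm ^ 3) = 12 * t ^ 2 * (3 * qm ^ 3 / 5) := by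
    rw [hleib, hleib, d12, dt2, dq3]; ring
  have dnum1 : δ ((1 + qm) ^ 2 * (12 - 25 * qm))
      = 2 * (1 + qm) * (qm / 5) * (12 - 25 * qm) + (1 + qm) ^ 2 * (-(5 * qm)) := by
    rw [hleib, dsq, sub_eq_add_neg, hadd, dneg, hleib, d12, d25, hδq]; ring
  have hL : t * qm / (5 * (1 + qm)) - t / 5 = -t / (5 * (1 + qm)) := by
    rw [div_sub_div _ _ (mul_ne_zero (by norm_num) h1q) (by norm_num : (5:K) ≠ 0),
      div_eq_div_iff (mul_ne_zero (mul_ne_zero (by norm_num) h1q) (by norm_num))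
        (mul_ne_zero (by norm_num) h1q)]
    ring
  have h5 : (5 : K) ≠ 0 := by norm_num
  have hd0 : t * qm ^ 2 ≠ 0 := mul_ne_zero ht (pow_ne_zero 2 hqm)
  have hd1 : (12 : K) * t ^ 2 * qm ^ 3 ≠ 0 :=
    mul_ne_zero (mul_ne_zero (by norm_num) (pow_ne_zero 2 ht)) (pow_ne_zero 3 hqm)
  refine ⟨?_, ?_, ?_⟩
  · rw [d0, hL, mul_one, div_mul_div_comm, zero_add,
      div_add_div _ _ (mul_ne_zero (mul_ne_zero h5 h1q) hd0)
        (mul_ne_zero h5 (pow_ne_zero 2 hqm)), div_eq_zero_iff]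
    left; ring
  · rw [dquot _ _ hd0, dsq, dden0, hL, div_mul_div_comm, div_mul_div_comm,
      div_add_div _ _ (pow_ne_zero 2 hd0) (mul_ne_zero (mul_ne_zero h5 h1q) hd1),
      div_add_div _ _ (mul_ne_zero (pow_ne_zero 2 hd0)
        (mul_ne_zero (mul_ne_zero h5 h1q) hd1))
        (mul_ne_zero (mul_ne_zero h5 (pow_ne_zero 2 hqm)) (mul_ne_zero ht hqm)),
      div_eq_zero_iff]
    left; ring
  · have hd2 : (288 : K) * t ^ 3 * qm ^ 4 ≠ 0 :=
      mul_ne_zero (mul_ne_zero (by norm_num) (pow_ne_zero 3 ht)) (pow_ne_zero 4 hqm)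
    rw [dquot _ _ hd1, dnum1, dden1, hL, div_mul_div_comm, div_mul_div_comm,
      div_add_div _ _ (pow_ne_zero 2 hd1) (mul_ne_zero (mul_ne_zero h5 h1q) hd2),
      div_add_div _ _ (mul_ne_zero (pow_ne_zero 2 hd1)
        (mul_ne_zero (mul_ne_zero h5 h1q) hd2))
        (mul_ne_zero (mul_ne_zero h5 (pow_ne_zero 2 hqm))
          (mul_ne_zero (pow_ne_zero 2 ht) (pow_ne_zero 2 hqm))),
      div_eq_zero_iff]
    left; ring

end
end
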